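/- Let n ≥ 1, let K ⊆ ℝⁿ be a nonempty compact ball-body, let x be a point in the topological boundary of K, and let u be a unit vector which is an outer normal to K at x, i.e. ⟨z − x, u⟩ ≤ 0 for all z ∈ K. Then K ⊆ B(x − u, 1), so y := x − u lies in K^c; moreover −u is an outer normal to K^c at y, i.e. ⟨w − y, −u⟩ ≤ 0 for all w ∈ K^c. -/

import Mathlib

open Metric Set

noncomputable section

/-- The `c`-dual of a set `A ⊆ ℝⁿ`. -/
def cDual {n : ℕ} (A : Set (EuclideanSpace ℝ (Fin n))) : Set (EuclideanSpace ℝ (Fin n)) :=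
  {y | ∀ x ∈ A, ‖x - y‖ ≤ 1}

set_option maxHeartbeats 800000 in
lemma key_spindle {E : Type*} [NormedAddCommGroup E] [InnerProductSpace ℝ E]
    (w u : E) (hu : ‖u‖ = 1) (hw2 : ‖w‖ ≤ 2)
    (ha : (inner ℝ w u : ℝ) ≤ 0) (hgt : 1 < ‖w + u‖) :
    ∃ p : E, 0 < (inner ℝ p u : ℝ) ∧ ∀ c : E, ‖c‖ ≤ 1 → ‖c - w‖ ≤ 1 → ‖p - c‖ ≤ 1 := by
  set a : ℝ := -(inner ℝ w u : ℝ) with ha_def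
  set m : ℝ := ‖w‖ ^ 2 with hm_def
  have ha0 : 0 ≤ a := by simp only [ha_def, neg_nonneg]; exact ha
  have hexp : ‖w + u‖ ^ 2 = m - 2 * a + 1 := by
    rw [norm_add_sq_real, hu]
    simp only [ha_def, hm_def]; ring
  have hgt2 : 1 < ‖w + u‖ ^ 2 := by nlinarith [norm_nonneg (w + u), hgt]
  have hma : 0 < m - 2 * a := by linarith [hexp ▸ hgt2]
  have hm0 : 0 < m := by linarith
  have hm4 : m ≤ 4 := by rw [hm_def]; nlinarith [norm_nonneg w, hw2]
  set t : ℝ := (m - 2 * a) / (2 * m) with ht_def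
  have ht0 : 0 < t := div_pos hma (by linarith)
  have htm : t * (2 * m) = m - 2 * a := by rw [ht_def]; field_simp
  have ht1 : t ≤ 1 / 2 := by
    rw [ht_def, div_le_div_iff₀ (by linarith) (by norm_num)]
    linarith
  set ε : ℝ := t * (1 - t) * m / 2 with hε_def
  have hε0 : 0 ≤ ε := by
    rw [hε_def]
    have : 0 ≤ 1 - t := by linarith
    positivity
  have hkey : ε - t * a = (m - 2 * a) ^ 2 / (8 * m) := by
    rw [hε_def, ht_def]; field_simp; ring
  clear_value a m t ε
  refine ⟨t • w + ε • u, ?_, ?_⟩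
  · have hip : (inner ℝ (t • w + ε • u) u : ℝ) = -(t * a) + ε := by
      rw [inner_add_left, real_inner_smul_left, real_inner_smul_left,
        real_inner_self_eq_norm_sq, hu]
      rw [ha_def]; ring
    rw [hip]
    have h8 : 0 < (m - 2 * a) ^ 2 / (8 * m) := div_pos (by positivity) (by linarith)
    linarith [hkey]
  · intro c hc hcw
    have hc2 : ‖c‖ ^ 2 ≤ 1 := by nlinarith [norm_nonneg c]
    have hcw2 : ‖c - w‖ ^ 2 ≤ 1 := by nlinarith [norm_nonneg (c - w)]
    have e1 : ‖c - w‖ ^ 2 = ‖c‖ ^ 2 - 2 * (inner ℝ c w : ℝ) + m := by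
      rw [norm_sub_sq_real, hm_def]
    have e2 : ‖c - t • w‖ ^ 2 = ‖c‖ ^ 2 - 2 * (t * (inner ℝ c w : ℝ)) + t ^ 2 * m := by
      rw [norm_sub_sq_real, real_inner_smul_right, norm_smul, mul_pow, Real.norm_eq_abs,
        sq_abs, hm_def]
    have hD0 : 0 ≤ t * (1 - t) * m := by
      have h1t : 0 ≤ 1 - t := by linarith
      positivity
    have hD1 : t * (1 - t) * m ≤ 1 := by nlinarith [sq_nonneg (t - 1 / 2)]
    have h2 : ‖c - t • w‖ ^ 2 ≤ 1 - t * (1 - t) * m := by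
      rw [e2]
      have hcw' := hcw2
      rw [e1] at hcw'
      nlinarith [mul_le_mul_of_nonneg_left hcw' ht0.le,
        mul_le_mul_of_nonneg_left hc2 (by linarith : (0:ℝ) ≤ 1 - t)]
    have h3 : ‖c - t • w‖ ≤ 1 - t * (1 - t) * m / 2 := by
      nlinarith [h2, norm_nonneg (c - t • w), hD0, hD1, sq_nonneg (t * (1 - t) * m / 2)]
    have h4 : ‖t • w + ε • u - c‖ ≤ ‖t • w - c‖ + ‖ε • u‖ := by
      have e : t • w + ε • u - c = (t • w - c) + ε • u := by abel
      rw [e]; exact norm_add_le _ _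
    have h5 : ‖ε • u‖ = ε := by
      rw [norm_smul, hu, Real.norm_eq_abs, abs_of_nonneg hε0, mul_one]
    have h6 : ‖t • w - c‖ = ‖c - t • w‖ := norm_sub_rev _ _
    rw [h5, h6] at h4
    rw [hε_def] at h4 ⊢
    linarith

/-- If `u` is an outer unit normal to a nonempty compact ball-body `K` at a boundary point
`x`, then `K ⊆ B(x - u, 1)` (so `x - u ∈ K^c`) and `-u` is an outer normal to `K^c` at
`x - u`. -/
theorem stmt7 (n : ℕ) (hn : 1 ≤ n) (K : Set (EuclideanSpace ℝ (Fin n)))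
    (hne : K.Nonempty) (hcomp : IsCompact K) (hbb : K = cDual (cDual K))
    (x u : EuclideanSpace ℝ (Fin n)) (hx : x ∈ frontier K) (hu : ‖u‖ = 1)
    (hnormal : ∀ z ∈ K, (inner ℝ (z - x) u : ℝ) ≤ 0) :
    K ⊆ closedBall (x - u) 1 ∧ (x - u) ∈ cDual K ∧
      ∀ w ∈ cDual K, (inner ℝ (w - (x - u)) (-u) : ℝ) ≤ 0 := by
  haveI : Nonempty (Fin n) := ⟨⟨0, hn⟩⟩
  have hclosed : IsClosed K := hcomp.isClosed
  have hxK : x ∈ K := by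
    have h := frontier_subset_closure hx
    rwa [hclosed.closure_eq] at h
  have hKcne : (cDual K).Nonempty := by
    rcases eq_empty_or_nonempty (cDual K) with h | h
    · exfalso
      have hKuniv : K = univ := by
        rw [hbb, h]
        ext y; simp [cDual]
      rw [hKuniv] at hcomp
      exact NormedSpace.unbounded_univ ℝ (EuclideanSpace ℝ (Fin n)) hcomp.isBounded
    · exact h
  obtain ⟨y₀, hy₀⟩ := hKcne
  have hmain : ∀ z ∈ K, ‖z - (x - u)‖ ≤ 1 := by
    intro z hz
    by_contra hcon
    push_neg at hcon
    have hw2 : ‖z - x‖ ≤ 2 := by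
      have h1 : ‖z - y₀‖ ≤ 1 := hy₀ z hz
      have h2 : ‖x - y₀‖ ≤ 1 := hy₀ x hxK
      calc ‖z - x‖ = ‖(z - y₀) - (x - y₀)‖ := by congr 1; abel
        _ ≤ ‖z - y₀‖ + ‖x - y₀‖ := norm_sub_le _ _
        _ ≤ 2 := by linarith
    have hgt : 1 < ‖(z - x) + u‖ := by
      have e : z - (x - u) = (z - x) + u := by abel
      rwa [e] at hcon
    obtain ⟨p, hp1, hp2⟩ := key_spindle (z - x) u hu hw2 (hnormal z hz) hgt
    have hPK : x + p ∈ K := by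
      rw [hbb]
      intro y hy
      have h1 : ‖x - y‖ ≤ 1 := hy x hxK
      have h2 : ‖z - y‖ ≤ 1 := hy z hz
      have hc1 : ‖y - x‖ ≤ 1 := by rwa [norm_sub_rev]
      have hc2 : ‖(y - x) - (z - x)‖ ≤ 1 := by
        have e : (y - x) - (z - x) = y - z := by abel
        rw [e, norm_sub_rev]; exact h2
      have h3 := hp2 (y - x) hc1 hc2
      have e : y - (x + p) = -(p - (y - x)) := by abel
      show ‖y - (x + p)‖ ≤ 1
      rw [e, norm_neg]
      exact h3
    have hcontra := hnormal (x + p) hPK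
    have e : (x + p) - x = p := by abel
    rw [e] at hcontra
    linarith
  refine ⟨?_, ?_, ?_⟩
  · intro z hz
    rw [mem_closedBall, dist_eq_norm]
    exact hmain z hz
  · intro z hz
    exact hmain z hz
  · intro w hw
    have hxw : ‖x - w‖ ≤ 1 := hw x hxK
    have e : w - (x - u) = (w - x) + u := by abel
    rw [e, inner_neg_right, inner_add_left, real_inner_self_eq_norm_sq, hu]
    have habs : |(inner ℝ (w - x) u : ℝ)| ≤ ‖w - x‖ * ‖u‖ := abs_real_inner_le_norm _ _
    rw [hu, mul_one] at habs
    have hwx : ‖w - x‖ ≤ 1 := by rwa [norm_sub_rev]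
    have h1 := abs_le.mp habs
    simp only [one_pow]
    linarith [h1.1]
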